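/- Let m ≥ 1 and let δ ∈ ℝ, δ ≠ 1. For λ₁,…,λₘ ∈ ℝ, the system consisting of the equations λₛ(λₛ+δ-1)·x_{2𝟏ₛ} + Σ_{i≠j} λᵢλⱼ·x_{𝟏ᵢ+𝟏ⱼ} = 0 (imposed for all basis choices as constraints on the rows of an invertible matrix) admits an invertible solution matrix [β]₂ if and only if λ = 0 or λ = (1-δ)𝟏ⱼ for some j. Equivalently: the vector v ∈ ℝ^{C(m+1,2)} with entries v_{2𝟏ₛ} = λₛ(λₛ+δ-1) and v_{𝟏ᵢ+𝟏ⱼ} = λᵢλⱼ (i ≠ j) is zero if and only if λ = 0 or λ = (1-δ)𝟏ⱼ for some j. -/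
import Mathlib


/-- The obstruction vector with entries `λₛ(λₛ+δ-1)` and `λᵢλⱼ (i ≠ j)` vanishes
iff `λ = 0` or `λ = (1-δ)·𝟏ⱼ` for some `j`. -/
theorem obstruction_vector_zero_iff (m : ℕ) (hm : 1 ≤ m) (δ : ℝ) (hδ : δ ≠ 1)
    (lam : Fin m → ℝ) :
    ((∀ s : Fin m, lam s * (lam s + δ - 1) = 0) ∧
      (∀ i j : Fin m, i ≠ j → lam i * lam j = 0)) ↔
    ((∀ j, lam j = 0) ∨
      ∃ j : Fin m, ∀ i, lam i = if i = j then 1 - δ else 0) := by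
  constructor
  · rintro ⟨h1, h2⟩
    by_cases hz : ∀ j, lam j = 0
    · exact Or.inl hz
    · push_neg at hz
      obtain ⟨j, hj⟩ := hz
      right
      refine ⟨j, fun i => ?_⟩
      have hjval : lam j = 1 - δ := by
        have := h1 j
        rcases mul_eq_zero.mp this with h | h
        · exact absurd h hj
        · linarith
      by_cases hij : i = j
      · simp [hij, hjval]
      · simp only [if_neg hij]
        have := h2 i j hij
        rcases mul_eq_zero.mp this with h | h
        · exact h
        · exact absurd h hj
  · rintro (hz | ⟨j, hj⟩)
    · constructor
      · intro s; simp [hz s]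
      · intro i j _; simp [hz i]
    · constructor
      · intro s
        by_cases hsj : s = j
        · rw [hj s, if_pos hsj]; ring
        · rw [hj s, if_neg hsj]; ring
      · intro i k hik
        by_cases hij : i = j
        · have : k ≠ j := by rw [← hij]; exact hik.symm
          rw [hj k, if_neg this]; ring
        · rw [hj i, if_neg hij]; ring
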